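/- Let n be a natural number, h > 0 a real number, and let V = ℝ^{2n} be Euclidean space with inner product ⟨·,·⟩ and Lebesgue measure. Let J : V → V be a linear isometry with J² = −1 (a compatible complex structure). Then for every x ∈ V one has (h/(2π))^n · ∫_V e^{−i(h/2)⟨s,Jx⟩} · e^{−h(‖s−x‖² + ‖s‖²)/4} ds = e^{−h‖x‖²/4}. (This expresses that the vacuum vector ξ₀(s) = (h/2π)^{n/2} e^{−h‖s‖²/4} satisfies ⟨λ^ω_x ξ₀, ξ₀⟩ = e^{−h‖x‖²/4} for the Weyl operators λ^ω_x associated with the cocycle ω(x,y) = e^{(ih/2)⟨x,Jy⟩}.) -/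

import Mathlib

open MeasureTheory Complex

lemma key_integral {ι : Type*} [Fintype ι] {b : ℂ} (hb : 0 < b.re) (c₁ c₂ : ℂ)
    (w₁ w₂ : EuclideanSpace ℝ ι) :
    ∫ v : EuclideanSpace ℝ ι,
      Complex.exp (-b * ‖v‖ ^ 2 + (c₁ * ((inner ℝ w₁ v : ℝ) : ℂ) + c₂ * ((inner ℝ w₂ v : ℝ) : ℂ))) =
    ((Real.pi : ℂ) / b) ^ (Fintype.card ι / 2 : ℂ) *
      Complex.exp ((c₁ ^ 2 * ‖w₁‖ ^ 2 + 2 * c₁ * c₂ * ((inner ℝ w₁ w₂ : ℝ) : ℂ)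
        + c₂ ^ 2 * ‖w₂‖ ^ 2) / (4 * b)) := by
  have := (EuclideanSpace.volume_preserving_symm_measurableEquiv_toLp ι).symm
  rw [← this.integral_comp (MeasurableEquiv.measurableEmbedding _)]
  simp only [neg_mul, Function.comp_def]
  convert GaussianFourier.integral_cexp_neg_mul_sum_add hb (fun i ↦ c₁ * w₁ i + c₂ * w₂ i)
    using 5 with _x y
  · rfl
  · simp only [MeasurableEquiv.symm_symm, MeasurableEquiv.toLp_apply,
      EuclideanSpace.norm_eq, PiLp.toLp_apply, Real.norm_eq_abs, neg_mul,
      neg_inj, mul_eq_mul_left_iff]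
    norm_cast
    left
    rw [Real.sq_sqrt (Finset.sum_nonneg (fun i _hi ↦ by positivity))]
    simp [_root_.sq_abs]
  · simp only [PiLp.inner_apply, MeasurableEquiv.symm_symm,
      MeasurableEquiv.toLp_apply, PiLp.toLp_apply, RCLike.inner_apply, conj_trivial,
      Complex.ofReal_sum, Complex.ofReal_mul, Finset.mul_sum, ← Finset.sum_add_distrib]
    exact Finset.sum_congr rfl fun i _ ↦ by ring
  · have h1 : ((‖w₁‖ : ℂ)) ^ 2 = ∑ i, ((w₁ i : ℂ)) ^ 2 := by
      norm_cast
      rw [EuclideanSpace.norm_eq, Real.sq_sqrt (Finset.sum_nonneg (fun i _hi ↦ by positivity))]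
      simp [_root_.sq_abs]
    have h2 : ((‖w₂‖ : ℂ)) ^ 2 = ∑ i, ((w₂ i : ℂ)) ^ 2 := by
      norm_cast
      rw [EuclideanSpace.norm_eq, Real.sq_sqrt (Finset.sum_nonneg (fun i _hi ↦ by positivity))]
      simp [_root_.sq_abs]
    have h3 : ((inner ℝ w₁ w₂ : ℝ) : ℂ) = ∑ i, (w₁ i : ℂ) * (w₂ i : ℂ) := by
      simp [PiLp.inner_apply, mul_comm]
    rw [h1, h2, h3]
    simp only [mul_pow, Finset.mul_sum, ← Finset.sum_add_distrib]
    exact Finset.sum_congr rfl fun i _ ↦ by ring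

/-- Vacuum expectation of Weyl operators: let `V = ℝ^{2n}` with a compatible complex structure
`J` (`J` a linear isometry with `J² = −1`) and `h > 0`. Then for every `x ∈ V`,
`(h/(2π))^n ∫_V e^{−i(h/2)⟨s,Jx⟩} e^{−h(‖s−x‖² + ‖s‖²)/4} ds = e^{−h‖x‖²/4}`. -/
theorem stmt_16 (n : ℕ) (h : ℝ) (hh : 0 < h)
    (J : EuclideanSpace ℝ (Fin (2 * n)) ≃ₗᵢ[ℝ] EuclideanSpace ℝ (Fin (2 * n)))
    (hJ : ∀ v : EuclideanSpace ℝ (Fin (2 * n)), J (J v) = -v) :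
    ∀ x : EuclideanSpace ℝ (Fin (2 * n)),
      (((h / (2 * Real.pi)) ^ n : ℝ) : ℂ) *
        ∫ s : EuclideanSpace ℝ (Fin (2 * n)),
          Complex.exp (-Complex.I * (((h / 2) * (inner ℝ s (J x) : ℝ) : ℝ) : ℂ)) *
            ((Real.exp (-(h * (‖s - x‖ ^ 2 + ‖s‖ ^ 2)) / 4) : ℝ) : ℂ) =
      ((Real.exp (-(h * ‖x‖ ^ 2) / 4) : ℝ) : ℂ) := by
  intro x
  have hskew : (inner ℝ x (J x) : ℝ) = 0 := by
    have h1 : (inner ℝ (J x) (J (J x)) : ℝ) = (inner ℝ x (J x) : ℝ) :=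
      J.inner_map_map x (J x)
    rw [hJ x, inner_neg_right, real_inner_comm] at h1
    linarith
  have hJnorm : ‖J x‖ = ‖x‖ := J.norm_map x
  -- rewrite integrand
  have hpt : ∀ s : EuclideanSpace ℝ (Fin (2 * n)),
      Complex.exp (-Complex.I * (((h / 2) * (inner ℝ s (J x) : ℝ) : ℝ) : ℂ)) *
          ((Real.exp (-(h * (‖s - x‖ ^ 2 + ‖s‖ ^ 2)) / 4) : ℝ) : ℂ) =
      Complex.exp (-(h / 2 : ℂ) * ‖s‖ ^ 2 +
          (((h : ℂ) / 2) * ((inner ℝ x s : ℝ) : ℂ) +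
            (-Complex.I * ((h : ℂ) / 2)) * ((inner ℝ (J x) s : ℝ) : ℂ))) *
        ((Real.exp (-(h * ‖x‖ ^ 2) / 4) : ℝ) : ℂ) := by
    intro s
    rw [Complex.ofReal_exp, Complex.ofReal_exp, ← Complex.exp_add, ← Complex.exp_add]
    congr 1
    have hns : ‖s - x‖ ^ 2 = ‖s‖ ^ 2 - 2 * (inner ℝ s x : ℝ) + ‖x‖ ^ 2 :=
      norm_sub_sq_real s x
    have hc1 : (inner ℝ x s : ℝ) = (inner ℝ s x : ℝ) := (real_inner_comm x s).symm
    have hc2 : (inner ℝ (J x) s : ℝ) = (inner ℝ s (J x) : ℝ) := real_inner_comm _ _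
    rw [hc1, hc2, hns]
    push_cast
    ring
  simp_rw [hpt]
  rw [integral_mul_const]
  have hb : (0:ℝ) < ((h/2 : ℂ)).re := by norm_num [hh]
  have key := key_integral (ι := Fin (2*n)) hb ((h/2 : ℝ) : ℂ)
    (-Complex.I * ((h/2 : ℝ) : ℂ)) x (J x)
  have hcast : (-(h / 2 : ℂ)) = -(((h/2 : ℝ) : ℂ)) := by push_cast; ring
  rw [show ((h/2 : ℝ) : ℂ) = (h/2 : ℂ) by push_cast; ring] at key
  rw [key]
  -- simplify the exponential argument to 0
  rw [hskew, hJnorm]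
  have hE : (((h/2 : ℂ)) ^ 2 * (‖x‖:ℂ) ^ 2 + 2 * ((h/2 : ℂ)) * (-Complex.I * (h/2 : ℂ)) * ((0:ℝ):ℂ)
      + (-Complex.I * (h/2 : ℂ)) ^ 2 * (‖x‖:ℂ) ^ 2) / (4 * (h/2 : ℂ)) = 0 := by
    have : (-Complex.I * (h/2 : ℂ)) ^ 2 = -((h/2 : ℂ))^2 := by
      rw [mul_pow, neg_pow, Complex.I_sq]; ring
    rw [this]
    push_cast
    ring
  rw [hE, Complex.exp_zero, mul_one]
  -- now: (h/(2π))^n * (π/(h/2))^(card/2) = 1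
  have hcard : ((Fintype.card (Fin (2*n)) : ℂ) / 2) = (n : ℂ) := by
    simp [Fintype.card_fin]
  rw [hcard]
  have hpos : (0:ℝ) < Real.pi / (h/2) := by positivity
  have hcpow : ((Real.pi : ℂ) / (h/2 : ℂ)) ^ (n : ℂ) = (((Real.pi / (h/2)) ^ n : ℝ) : ℂ) := by
    rw [show ((Real.pi : ℂ) / (h/2 : ℂ)) = ((Real.pi / (h/2) : ℝ) : ℂ) by push_cast; ring,
      Complex.cpow_natCast]
    push_cast; ring
  rw [hcpow, ← mul_assoc, ← Complex.ofReal_mul, ← mul_pow]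
  have : h / (2 * Real.pi) * (Real.pi / (h / 2)) = 1 := by
    field_simp
  rw [this, one_pow, Complex.ofReal_one, one_mul]
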